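/- Let n = 4 and let c be a parameter collection. Suppose there exist a sequence t_m → 0⁺ and unit vectors ξ_m ∈ S^3 ⊂ ℝ^4 with rank P(ξ_m, t_m c) ≤ 2 for every m (i.e., all 3×3 minors of the principal symbol vanish at ξ_m), such that ξ_m → a = (0, 0, a_3, a_4) with a_3 a_4 ≠ 0. Then c_2^{13} c_1^{24} = c_1^{23} c_2^{14}. -/
import Mathlib


open Matrix

/-- A parameter collection: `c i k j` denotes `c_i^{kj}`, symmetric in the two
superscripts, with normalizations `c_i^{ii} = 1` and `c_i^{jj} = 0` for `i ≠ j`. -/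
def IsParamColl (n : ℕ) (c : Fin n → Fin n → Fin n → ℝ) : Prop :=
  (∀ i j k : Fin n, j ≠ k → c i k j = c i j k) ∧
  (∀ i : Fin n, c i i i = 1) ∧
  (∀ i j : Fin n, i ≠ j → c i j j = 0)

/-- The principal symbol `P(ξ, c) = Σ_k ξ_k A^k`, where `(A^k)_{ij} = c_i^{kj}`. -/
def pSymb {n : ℕ} (ξ : Fin n → ℝ) (c : Fin n → Fin n → Fin n → ℝ) :
    Matrix (Fin n) (Fin n) ℝ :=
  Matrix.of fun i j => ∑ k, ξ k * c i k j

/-- The scaled parameter collection `t • c` (normalized entries unchanged). -/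
def pScale {n : ℕ} (t : ℝ) (c : Fin n → Fin n → Fin n → ℝ) :
    Fin n → Fin n → Fin n → ℝ :=
  fun i k j => if k = j then c i k j else t * c i k j

lemma det_submatrix_eq_zero {A : Matrix (Fin 4) (Fin 4) ℝ} (hA : A.rank ≤ 2)
    (r s : Fin 3 → Fin 4) : (A.submatrix r s).det = 0 := by
  classical
  rw [← Matrix.exists_mulVec_eq_zero_iff]
  set W := LinearMap.range A.mulVecLin with hW
  have hmem : ∀ j : Fin 3, (fun i => A i (s j)) ∈ W := by
    intro j
    refine ⟨Pi.single (s j) 1, ?_⟩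
    ext i
    simp [Matrix.mulVecLin_apply, Matrix.mulVec_single]
  have hdep : ¬ LinearIndependent ℝ (fun j : Fin 3 => (fun i => A i (s j))) := by
    intro hli
    have hli' : LinearIndependent ℝ (fun j : Fin 3 => (⟨fun i => A i (s j), hmem j⟩ : W)) := by
      apply LinearIndependent.of_comp W.subtype
      exact hli
    have h3 : Fintype.card (Fin 3) ≤ Module.finrank ℝ W := hli'.fintype_card_le_finrank
    have : Module.finrank ℝ W ≤ 2 := hA
    simp [Fintype.card_fin] at h3
    omega
  rw [Fintype.not_linearIndependent_iff] at hdep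
  obtain ⟨g, hg0, j0, hgj⟩ := hdep
  refine ⟨g, ?_, ?_⟩
  · intro h; apply hgj; rw [h]; rfl
  · ext i
    have := congrFun hg0 (r i)
    simpa [Matrix.mulVec, dotProduct, Finset.sum_apply, mul_comm] using this

lemma pSymb_entry (t : ℝ) (c : Fin 4 → Fin 4 → Fin 4 → ℝ) (v : Fin 4 → ℝ) (i j : Fin 4) :
    pSymb v (pScale t c) i j = t * (∑ k, v k * c i k j) + (1 - t) * (v j * c i j j) := by
  simp only [pSymb, pScale, Matrix.of_apply]
  have hs : (1 - t) * (v j * c i j j)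
      = ∑ k, if k = j then (1 - t) * (v k * c i k j) else 0 := by
    rw [Finset.sum_ite_eq' Finset.univ j (fun k => (1 - t) * (v k * c i k j))]
    simp
  rw [Finset.mul_sum, hs, ← Finset.sum_add_distrib]
  refine Finset.sum_congr rfl fun k _ => ?_
  split_ifs with h
  · subst h; ring
  · ring

def Sv (c : Fin 4 → Fin 4 → Fin 4 → ℝ) (i j : Fin 4) (v : Fin 4 → ℝ) : ℝ :=
  ∑ k, v k * c i k j

def Gfun (c : Fin 4 → Fin 4 → Fin 4 → ℝ) (i0 j0 : Fin 4) (t : ℝ) (v : Fin 4 → ℝ) : ℝ :=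
  Sv c i0 j0 v * ((t * Sv c 2 2 v + (1 - t) * v 2) * (t * Sv c 3 3 v + (1 - t) * v 3)
      - (t * Sv c 2 3 v) * (t * Sv c 3 2 v))
  - Sv c i0 2 v * ((t * Sv c 2 j0 v) * (t * Sv c 3 3 v + (1 - t) * v 3)
      - (t * Sv c 2 3 v) * (t * Sv c 3 j0 v))
  + Sv c i0 3 v * ((t * Sv c 2 j0 v) * (t * Sv c 3 2 v)
      - (t * Sv c 2 2 v + (1 - t) * v 2) * (t * Sv c 3 j0 v))

lemma Gcont (c : Fin 4 → Fin 4 → Fin 4 → ℝ) (i0 j0 : Fin 4) :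
    Continuous fun p : ℝ × (Fin 4 → ℝ) => Gfun c i0 j0 p.1 p.2 := by
  unfold Gfun Sv
  fun_prop

lemma det_eq_t_mul_G (c : Fin 4 → Fin 4 → Fin 4 → ℝ) (i0 j0 : Fin 4) (t : ℝ) (v : Fin 4 → ℝ)
    (h1 : c i0 j0 j0 = 0) (h2 : c 2 j0 j0 = 0) (h3 : c 3 j0 j0 = 0)
    (h4 : c 2 2 2 = 1) (h5 : c 2 3 3 = 0) (h6 : c 3 2 2 = 0) (h7 : c 3 3 3 = 1)
    (h8 : c i0 2 2 = 0) (h9 : c i0 3 3 = 0) :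
    ((pSymb v (pScale t c)).submatrix ![i0, 2, 3] ![j0, 2, 3]).det
      = t * Gfun c i0 j0 t v := by
  simp only [Matrix.det_fin_three, Matrix.submatrix_apply, Matrix.cons_val_zero,
    Matrix.cons_val_one, Matrix.head_cons, Matrix.cons_val_two, Matrix.tail_cons,
    pSymb_entry, h1, h2, h3, h4, h5, h6, h7, h8, h9, Gfun, Sv]
  ring

lemma key_rel (c : Fin 4 → Fin 4 → Fin 4 → ℝ) (i0 j0 : Fin 4)
    (h1 : c i0 j0 j0 = 0) (h2 : c 2 j0 j0 = 0) (h3 : c 3 j0 j0 = 0)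
    (h4 : c 2 2 2 = 1) (h5 : c 2 3 3 = 0) (h6 : c 3 2 2 = 0) (h7 : c 3 3 3 = 1)
    (h8 : c i0 2 2 = 0) (h9 : c i0 3 3 = 0)
    (t : ℕ → ℝ) (ht0 : ∀ m, 0 < t m)
    (htlim : Filter.Tendsto t Filter.atTop (nhds 0))
    (ξ : ℕ → Fin 4 → ℝ)
    (hdet : ∀ m, ((pSymb (ξ m) (pScale (t m) c)).submatrix ![i0, 2, 3] ![j0, 2, 3]).det = 0)
    (a : Fin 4 → ℝ) (ha0 : a 0 = 0) (ha1 : a 1 = 0) (ha23 : a 2 * a 3 ≠ 0)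
    (hlim : Filter.Tendsto ξ Filter.atTop (nhds a)) :
    a 2 * c i0 2 j0 + a 3 * c i0 3 j0 = 0 := by
  have hGzero : ∀ m, Gfun c i0 j0 (t m) (ξ m) = 0 := by
    intro m
    have hd := hdet m
    rw [det_eq_t_mul_G c i0 j0 (t m) (ξ m) h1 h2 h3 h4 h5 h6 h7 h8 h9] at hd
    exact (mul_eq_zero.mp hd).resolve_left (ht0 m).ne'
  have hT : Filter.Tendsto (fun m => (t m, ξ m)) Filter.atTop (nhds ((0 : ℝ), a)) :=
    htlim.prodMk_nhds hlim
  have hG' := ((Gcont c i0 j0).tendsto ((0 : ℝ), a)).comp hT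
  simp only [Function.comp_def] at hG'
  have hG : Filter.Tendsto (fun m => Gfun c i0 j0 (t m) (ξ m)) Filter.atTop
      (nhds (Gfun c i0 j0 0 a)) := hG'
  have hGz : Filter.Tendsto (fun m => Gfun c i0 j0 (t m) (ξ m)) Filter.atTop
      (nhds (0 : ℝ)) := by
    simp only [hGzero]
    exact tendsto_const_nhds
  have h0 : Gfun c i0 j0 0 a = 0 := tendsto_nhds_unique hG hGz
  have hval : Gfun c i0 j0 0 a
      = (a 2 * c i0 2 j0 + a 3 * c i0 3 j0) * (a 2 * a 3) := by
    simp only [Gfun, Sv, Fin.sum_univ_four, ha0, ha1]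
    ring
  rw [hval] at h0
  exact (mul_eq_zero.mp h0).resolve_right ha23

/-- The indices 1,2,3,4 of the paper correspond to `0,1,2,3 : Fin 4`.  The
conclusion `c_2^{13} c_1^{24} = c_1^{23} c_2^{14}` reads
`c 1 0 2 * c 0 1 3 = c 0 1 2 * c 1 0 3`. -/
theorem stmt14 (c : Fin 4 → Fin 4 → Fin 4 → ℝ) (hc : IsParamColl 4 c)
    (t : ℕ → ℝ) (ht0 : ∀ m, 0 < t m)
    (htlim : Filter.Tendsto t Filter.atTop (nhds 0))
    (ξ : ℕ → Fin 4 → ℝ) (hξunit : ∀ m, ∑ k, (ξ m k) ^ 2 = 1)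
    (hrank : ∀ m, (pSymb (ξ m) (pScale (t m) c)).rank ≤ 2)
    (a : Fin 4 → ℝ) (ha0 : a 0 = 0) (ha1 : a 1 = 0) (ha23 : a 2 * a 3 ≠ 0)
    (hlim : Filter.Tendsto ξ Filter.atTop (nhds a)) :
    c 1 0 2 * c 0 1 3 = c 0 1 2 * c 1 0 3 := by
  obtain ⟨hsym, hone, hzero⟩ := hc
  have E1 : a 2 * c 0 2 1 + a 3 * c 0 3 1 = 0 := by
    apply key_rel c 0 1 (hzero 0 1 (by decide)) (hzero 2 1 (by decide))
      (hzero 3 1 (by decide)) (hone 2) (hzero 2 3 (by decide)) (hzero 3 2 (by decide))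
      (hone 3) (hzero 0 2 (by decide)) (hzero 0 3 (by decide)) t ht0 htlim ξ
      (fun m => det_submatrix_eq_zero (hrank m) _ _) a ha0 ha1 ha23 hlim
  have E2 : a 2 * c 1 2 0 + a 3 * c 1 3 0 = 0 := by
    apply key_rel c 1 0 (hzero 1 0 (by decide)) (hzero 2 0 (by decide))
      (hzero 3 0 (by decide)) (hone 2) (hzero 2 3 (by decide)) (hzero 3 2 (by decide))
      (hone 3) (hzero 1 2 (by decide)) (hzero 1 3 (by decide)) t ht0 htlim ξ
      (fun m => det_submatrix_eq_zero (hrank m) _ _) a ha0 ha1 ha23 hlim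
  rw [hsym 0 1 2 (by decide), hsym 0 1 3 (by decide)] at E1
  rw [hsym 1 0 2 (by decide), hsym 1 0 3 (by decide)] at E2
  have ha2 : a 2 ≠ 0 := fun h => ha23 (by rw [h, zero_mul])
  apply mul_left_cancel₀ ha2
  linear_combination c 0 1 3 * E2 - c 1 0 3 * E1
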